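/- For the ODE z^2 X'' - z X' + θ(z-1) X = 0 with θ ≠ 0 (equation (E.2)# for the type O(-2,-3) data with μ_1 = 1), the log-term coefficient at z = 0 is nonzero. Concretely, with p_0 = -1, q_0 = -θ, q_1 = θ and all other coefficients zero, the recursion a_0 = 1, a_j = (1/(j(m-j))) Σ_{k=0}^{j-1}((λ_2+k)p_{j-k}+q_{j-k}) a_k produces a log-term coefficient c which is a nonzero multiple of θ^m, hence c ≠ 0. -/

import Mathlib

/-- For the ODE z²X'' - zX' + θ(z-1)X = 0 (θ ≠ 0), i.e. p₀ = -1,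
q₀ = -θ, q₁ = θ, all other coefficients zero: if the roots of the indicial equation
t(t-1) - t - θ = 0 differ by a positive integer m, then the log-term coefficient
c = -θ^m/(m!(m-1)!), which is nonzero. -/
theorem type_O23_mu1_no_logfree (θ : ℂ) (hθ : θ ≠ 0) (m : ℕ) (hm : 1 ≤ m)
    (hm2 : ((m : ℂ)) ^ 2 = 4 + 4 * θ)
    (p q : ℕ → ℂ) (lam2 : ℂ)
    (hp0 : p 0 = -1) (hp : ∀ j, 1 ≤ j → p j = 0)
    (hq0 : q 0 = -θ) (hq1 : q 1 = θ) (hq : ∀ j, 2 ≤ j → q j = 0)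
    (hlam2 : lam2 = ((1 - p 0) - (m : ℂ)) / 2)
    (a : ℕ → ℂ) (ha0 : a 0 = 1)
    (ha : ∀ j, 1 ≤ j → j ≤ m - 1 →
      a j = (1 / ((j : ℂ) * ((m : ℂ) - (j : ℂ)))) *
        ∑ k ∈ Finset.range j, ((lam2 + (k : ℂ)) * p (j - k) + q (j - k)) * a k)
    (c : ℂ)
    (hc : c = -(1 / (m : ℂ)) *
      ∑ k ∈ Finset.range m, ((lam2 + (k : ℂ)) * p (m - k) + q (m - k)) * a k) :
    c = -θ ^ m / ((m.factorial : ℂ) * ((m - 1).factorial : ℂ)) ∧ c ≠ 0 := by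
  -- a general fact: the sum in the recursion collapses to the k = j-1 term
  have hsum : ∀ j, 1 ≤ j →
      (∑ k ∈ Finset.range j, ((lam2 + (k : ℂ)) * p (j - k) + q (j - k)) * a k)
        = θ * a (j - 1) := by
    intro j hj
    rw [Finset.sum_eq_single (j - 1)]
    · have h1 : j - (j - 1) = 1 := by omega
      rw [h1, hp 1 le_rfl, hq1]; ring
    · intro k hk hne
      have hk' : k < j := Finset.mem_range.mp hk
      have h2 : 2 ≤ j - k := by omega
      rw [hp (j - k) (by omega), hq (j - k) h2]; ring
    · intro h
      exact absurd (Finset.mem_range.mpr (by omega)) h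
  -- closed form for a j, for j ≤ m - 1
  have hfne : ∀ n : ℕ, ((n.factorial : ℂ)) ≠ 0 := fun n => by
    exact_mod_cast Nat.factorial_ne_zero n
  have key : ∀ j, j ≤ m - 1 →
      a j * ((j.factorial : ℂ) * ((m - 1).factorial : ℂ))
        = θ ^ j * ((m - 1 - j).factorial : ℂ) := by
    intro j
    induction j with
    | zero =>
      intro _
      simp [ha0]
    | succ j ih =>
      intro hjm
      have hj' : j ≤ m - 1 := by omega
      have ih' := ih hj'
      rw [ha (j + 1) (by omega) hjm, hsum (j + 1) (by omega)]
      simp only [Nat.add_sub_cancel]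
      set s := m - 1 - (j + 1) with hsdef
      have hs : m - 1 - j = s + 1 := by omega
      rw [hs] at ih'
      have hms : (m : ℂ) - ((j : ℂ) + 1) = (s : ℂ) + 1 := by
        have hmeq : m = s + 1 + (j + 1) := by omega
        rw [hmeq]; push_cast; ring
      have h1 : ((j : ℂ) + 1) ≠ 0 := by
        have : (((j + 1 : ℕ)) : ℂ) ≠ 0 := Nat.cast_ne_zero.mpr (Nat.succ_ne_zero j)
        exact_mod_cast this
      have h2 : ((s : ℂ)) + 1 ≠ 0 := by
        have : (((s + 1 : ℕ)) : ℂ) ≠ 0 := Nat.cast_ne_zero.mpr (Nat.succ_ne_zero s)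
        exact_mod_cast this
      rw [Nat.factorial_succ j]
      push_cast
      rw [hms]
      rw [Nat.factorial_succ] at ih'
      push_cast at ih'
      field_simp
      linear_combination θ * ih'
  -- now compute c
  have ham1 : a (m - 1) * (((m - 1).factorial : ℂ) * ((m - 1).factorial : ℂ))
      = θ ^ (m - 1) := by
    have h := key (m - 1) le_rfl
    simpa [Nat.sub_self] using h
  have hmne : (m : ℂ) ≠ 0 := Nat.cast_ne_zero.mpr (by omega)
  have hmf : (m.factorial : ℂ) = (m : ℂ) * ((m - 1).factorial : ℂ) := by
    have h : m.factorial = m * (m - 1).factorial := by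
      conv_lhs => rw [show m = (m - 1) + 1 from by omega]
      rw [Nat.factorial_succ]
      congr 2
      omega
    rw [h]; push_cast; ring
  have hθm : θ ^ m = θ * θ ^ (m - 1) := by
    conv_lhs => rw [show m = 1 + (m - 1) from by omega]
    rw [pow_add, pow_one]
  have hcval : c = -θ ^ m / ((m.factorial : ℂ) * ((m - 1).factorial : ℂ)) := by
    rw [hc, hsum m hm, hmf, hθm, neg_mul, one_div, inv_mul_eq_div, ← neg_div]
    rw [div_eq_div_iff hmne
      (mul_ne_zero (mul_ne_zero hmne (hfne (m - 1))) (hfne (m - 1)))]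
    linear_combination (-θ * (m : ℂ)) * ham1
  refine ⟨hcval, ?_⟩
  rw [hcval]
  apply div_ne_zero
  · simpa using pow_ne_zero m hθ
  · exact mul_ne_zero (hfne m) (hfne (m - 1))
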